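/- For all real numbers t and θ and every natural number K: | e^{−i·t·cos θ} − ( J₀(t) + 2·∑_{k=1}^{K} (−i)^k · J_k(t) · cos(kθ) ) | ≤ 2 · e^{t²/4} · ∑_{k=K+1}^∞ (|t|/2)^k / k! ≤ 2 · e^{t²/4 + |t|/2} · (|t|/2)^{K+1} / (K+1)!. (This quantifies the truncation error |e^{−iλt} − e^{−iλ't}| of the K-th order generalized quantum signal processing approximation in Lemma A.4 of the paper, showing it decays super-exponentially in the truncation order K.) -/

import Mathlib

/-- The Bessel function of the first kind of nonnegative integer order:
`J_k(t) = ∑_{m=0}^∞ ((−1)^m / (m!·(m+k)!)) · (t/2)^{2m+k}`. -/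
noncomputable def besselJ (k : ℕ) (t : ℝ) : ℝ :=
  ∑' m : ℕ, ((-1:ℝ)^m / ((Nat.factorial m : ℝ) * (Nat.factorial (m + k) : ℝ))) * (t/2)^(2*m+k)

private lemma cexp_tsum (z : ℂ) : Complex.exp z = ∑' n : ℕ, z ^ n / (Nat.factorial n : ℂ) := by
  rw [Complex.exp_eq_exp_ℂ, NormedSpace.exp_eq_tsum_div]

private lemma rexp_tsum (x : ℝ) : Real.exp x = ∑' n : ℕ, x ^ n / (Nat.factorial n : ℝ) := by
  rw [Real.exp_eq_exp_ℝ, NormedSpace.exp_eq_tsum_div]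

private lemma bessel_term_abs_le (t : ℝ) (k m : ℕ) :
    |((-1:ℝ)^m / ((Nat.factorial m : ℝ) * (Nat.factorial (m + k) : ℝ))) * (t/2)^(2*m+k)|
      ≤ (t^2/4)^m / (Nat.factorial m : ℝ) * ((|t|/2)^k / (Nat.factorial k : ℝ)) := by
  have h1 : |((-1:ℝ)^m / ((Nat.factorial m : ℝ) * (Nat.factorial (m + k) : ℝ))) * (t/2)^(2*m+k)|
      = (|t|/2)^(2*m+k) / ((Nat.factorial m : ℝ) * (Nat.factorial (m + k) : ℝ)) := by
    rw [abs_mul, abs_div, abs_pow, abs_pow, abs_neg, abs_one, one_pow, abs_div]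
    simp only [abs_of_nonneg, Nat.cast_nonneg, abs_mul, Nat.abs_cast]
    rw [show |(2:ℝ)| = 2 by norm_num]
    ring
  rw [h1]
  have h2 : (|t|/2)^(2*m+k) = (t^2/4)^m * (|t|/2)^k := by
    have h0 : (|t|/2)^(2*m+k) = ((|t|/2)^2)^m * (|t|/2)^k := by
      rw [← pow_mul, ← pow_add]
    have hbase : (|t|/2)^2 = t^2/4 := by
      rw [div_pow, sq_abs]; norm_num
    rw [h0, hbase]
  rw [h2]
  have hk : (Nat.factorial k : ℝ) ≤ (Nat.factorial (m + k) : ℝ) := by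
    exact_mod_cast Nat.factorial_le (Nat.le_add_left k m)
  have h3 : (t^2/4)^m / (Nat.factorial m : ℝ) * ((|t|/2)^k / (Nat.factorial k : ℝ))
      = (t^2/4)^m * (|t|/2)^k / ((Nat.factorial m : ℝ) * (Nat.factorial k : ℝ)) := by ring
  rw [h3]
  have := hk
  gcongr

private lemma bessel_term_summable (t : ℝ) (k : ℕ) :
    Summable (fun m : ℕ =>
      |((-1:ℝ)^m / ((Nat.factorial m : ℝ) * (Nat.factorial (m + k) : ℝ))) * (t/2)^(2*m+k)|) := by
  refine Summable.of_nonneg_of_le (fun m => abs_nonneg _) (fun m => bessel_term_abs_le t k m) ?_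
  exact (Real.summable_pow_div_factorial (t^2/4)).mul_right _

private lemma besselJ_abs_le (t : ℝ) (k : ℕ) :
    |besselJ k t| ≤ Real.exp (t^2/4) * ((|t|/2)^k / (Nat.factorial k : ℝ)) := by
  have hs := bessel_term_summable t k
  rw [besselJ]
  calc |∑' m : ℕ, ((-1:ℝ)^m / ((Nat.factorial m : ℝ) * (Nat.factorial (m + k) : ℝ))) * (t/2)^(2*m+k)| ≤ ∑' m : ℕ,
        |((-1:ℝ)^m / ((Nat.factorial m : ℝ) * (Nat.factorial (m + k) : ℝ))) * (t/2)^(2*m+k)| := by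
        have := norm_tsum_le_tsum_norm
          (f := fun m : ℕ => ((-1:ℝ)^m / ((Nat.factorial m : ℝ) * (Nat.factorial (m + k) : ℝ))) * (t/2)^(2*m+k))
          (by simpa only [Real.norm_eq_abs] using hs)
        simpa only [Real.norm_eq_abs] using this
    _ ≤ ∑' m : ℕ, (t^2/4)^m / (Nat.factorial m : ℝ) * ((|t|/2)^k / (Nat.factorial k : ℝ)) :=
        Summable.tsum_le_tsum (fun m => bessel_term_abs_le t k m) hs
          ((Real.summable_pow_div_factorial (t^2/4)).mul_right _)
    _ = Real.exp (t^2/4) * ((|t|/2)^k / (Nat.factorial k : ℝ)) := by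
        rw [tsum_mul_right, rexp_tsum]

private def pairEquiv : ℤ × ℕ ≃ ℕ × ℕ where
  toFun q := (q.2 + q.1.toNat, q.2 + (-q.1).toNat)
  invFun p := ((p.1 : ℤ) - (p.2 : ℤ), min p.1 p.2)
  left_inv := by
    rintro ⟨k, m⟩
    simp only [Prod.mk.injEq]
    constructor <;> omega
  right_inv := by
    rintro ⟨n, m⟩
    simp only [Prod.mk.injEq]
    constructor <;> omega

/-- Fiber sum computation. -/
private lemma fiber_sum (t : ℝ) (w w' : ℂ) (h : w * w' = -1) (k : ℕ) :
    ∑' m : ℕ, ((t:ℂ)/2*w)^(m+k) / (Nat.factorial (m+k) : ℂ) * (((t:ℂ)/2*w')^m / (Nat.factorial m : ℂ))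
      = w^k * ((besselJ k t : ℝ) : ℂ) := by
  rw [besselJ, Complex.ofReal_tsum, ← tsum_mul_left]
  refine tsum_congr fun m => ?_
  have hww : w ^ (m + k) * w' ^ m = (-1 : ℂ)^m * w^k := by
    rw [pow_add, ← h, mul_pow]; ring
  have hc : ((t:ℂ)/2)^(m+k) * ((t:ℂ)/2)^m = ((t:ℂ)/2)^(2*m+k) := by
    rw [← pow_add]; congr 1; omega
  have hm : ((Nat.factorial m : ℂ)) ≠ 0 := by
    exact_mod_cast (Nat.factorial_ne_zero m)
  have hmk : ((Nat.factorial (m+k) : ℂ)) ≠ 0 := by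
    exact_mod_cast (Nat.factorial_ne_zero (m+k))
  push_cast
  rw [mul_pow, mul_pow]
  have hww2 : w^m * w'^m = (-1:ℂ)^m := by rw [← mul_pow, h]
  linear_combination ((t:ℂ)/2)^(m+k)*((t:ℂ)/2)^m*w^k/((Nat.factorial (m+k):ℂ)*(Nat.factorial m:ℂ)) * hww2

private lemma pairEquiv_apply (k : ℤ) (m : ℕ) :
    pairEquiv (k, m) = (m + k.toNat, m + (-k).toNat) := rfl

private noncomputable def uu (θ : ℝ) : ℂ := -Complex.I * Complex.exp ((θ:ℂ)*Complex.I)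
private noncomputable def vv (θ : ℝ) : ℂ := -Complex.I * Complex.exp (-(θ:ℂ)*Complex.I)
private noncomputable def ff (t θ : ℝ) (n : ℕ) : ℂ := ((t:ℂ)/2 * uu θ)^n / (Nat.factorial n : ℂ)
private noncomputable def gg (t θ : ℝ) (n : ℕ) : ℂ := ((t:ℂ)/2 * vv θ)^n / (Nat.factorial n : ℂ)
private noncomputable def hh (t θ : ℝ) (q : ℤ × ℕ) : ℂ :=
  ff t θ (pairEquiv q).1 * gg t θ (pairEquiv q).2
private noncomputable def FF (t θ : ℝ) (k : ℤ) : ℂ := ∑' m : ℕ, hh t θ (k, m)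

private lemma huv (θ : ℝ) : uu θ * vv θ = -1 := by
  rw [uu, vv]
  have h1 : Complex.exp ((θ:ℂ)*Complex.I) * Complex.exp (-(θ:ℂ)*Complex.I) = 1 := by
    rw [← Complex.exp_add, show (θ:ℂ)*Complex.I + -(θ:ℂ)*Complex.I = 0 by ring, Complex.exp_zero]
  calc (-Complex.I * Complex.exp ((θ:ℂ)*Complex.I)) * (-Complex.I * Complex.exp (-(θ:ℂ)*Complex.I))
      = (Complex.I*Complex.I) * (Complex.exp ((θ:ℂ)*Complex.I) * Complex.exp (-(θ:ℂ)*Complex.I)) := by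
        ring
    _ = -1 := by rw [h1, Complex.I_mul_I]; ring

private lemma hff_norm (t θ : ℝ) : Summable (fun n => ‖ff t θ n‖) := by
  have : ∀ n : ℕ, ‖ff t θ n‖ = ‖(t:ℂ)/2 * uu θ‖^n / (Nat.factorial n : ℝ) := by
    intro n
    rw [ff, norm_div, norm_pow]
    norm_num
  exact (summable_congr this).2 (Real.summable_pow_div_factorial _)

private lemma hgg_norm (t θ : ℝ) : Summable (fun n => ‖gg t θ n‖) := by
  have : ∀ n : ℕ, ‖gg t θ n‖ = ‖(t:ℂ)/2 * vv θ‖^n / (Nat.factorial n : ℝ) := by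
    intro n
    rw [gg, norm_div, norm_pow]
    norm_num
  exact (summable_congr this).2 (Real.summable_pow_div_factorial _)

private lemma hprod_norm (t θ : ℝ) :
    Summable (fun p : ℕ × ℕ => ‖ff t θ p.1 * gg t θ p.2‖) :=
  (hff_norm t θ).mul_norm (hgg_norm t θ)

private lemma hprod_sum (t θ : ℝ) : Summable (fun p : ℕ × ℕ => ff t θ p.1 * gg t θ p.2) :=
  (hprod_norm t θ).of_norm

private lemma hh_summable (t θ : ℝ) : Summable (hh t θ) := by
  have := (Equiv.summable_iff pairEquiv
    (f := fun p : ℕ × ℕ => ff t θ p.1 * gg t θ p.2)).2 (hprod_sum t θ)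
  exact this

private lemma FF_summable (t θ : ℝ) : Summable (FF t θ) := by
  have h := (hh_summable t θ)
  exact ((h.hasSum.prod_fiberwise (fun k => (h.prod_factor k).hasSum)).summable)

private lemma FF_nat (t θ : ℝ) (j : ℕ) : FF t θ (j:ℤ) = (uu θ)^j * ((besselJ j t : ℝ) : ℂ) := by
  have hterm : ∀ m : ℕ, hh t θ ((j:ℤ), m) = ff t θ (m + j) * gg t θ m := by
    intro m
    have h1 : ((j:ℤ)).toNat = j := by omega
    have h2 : ((-(j:ℤ))).toNat = 0 := by omega
    simp only [hh, pairEquiv_apply, h1, h2, add_zero]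
  rw [FF, tsum_congr hterm]
  exact fiber_sum t (uu θ) (vv θ) (huv θ) j

private lemma FF_neg (t θ : ℝ) (j : ℕ) :
    FF t θ (-((j:ℤ)+1)) = (vv θ)^(j+1) * ((besselJ (j+1) t : ℝ) : ℂ) := by
  have hterm : ∀ m : ℕ, hh t θ ((-((j:ℤ)+1)), m)
      = ((t:ℂ)/2 * vv θ)^(m+(j+1)) / (Nat.factorial (m+(j+1)) : ℂ)
        * (((t:ℂ)/2 * uu θ)^m / (Nat.factorial m : ℂ)) := by
    intro m
    have h1 : ((-((j:ℤ)+1))).toNat = 0 := by omega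
    have h2 : ((-(-((j:ℤ)+1)))).toNat = j+1 := by omega
    simp only [hh, pairEquiv_apply, h1, h2, add_zero, ff, gg]
    ring
  rw [FF, tsum_congr hterm]
  exact fiber_sum t (vv θ) (uu θ) (by rw [mul_comm]; exact huv θ) (j+1)

private lemma upow_add_vpow (t θ : ℝ) (j : ℕ) :
    (uu θ)^j + (vv θ)^j = (-Complex.I)^j * (2 * ((Real.cos ((j:ℝ)*θ) : ℝ) : ℂ)) := by
  rw [uu, vv, mul_pow, mul_pow, ← Complex.exp_nat_mul, ← Complex.exp_nat_mul]
  have e1 : (j:ℂ) * ((θ:ℂ)*Complex.I) = (((j:ℝ)*θ : ℝ):ℂ) * Complex.I := by push_cast; ring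
  have e2 : (j:ℂ) * (-(θ:ℂ)*Complex.I) = -(((j:ℝ)*θ : ℝ):ℂ) * Complex.I := by push_cast; ring
  rw [e1, e2, Complex.ofReal_cos]
  have h2c := Complex.two_cos (x := (((j:ℝ)*θ : ℝ):ℂ))
  linear_combination -((-Complex.I)^j) * h2c

private lemma jacobiAnger (t θ : ℝ) :
    Complex.exp (-Complex.I * (t : ℂ) * ((Real.cos θ : ℝ) : ℂ)) =
      ((besselJ 0 t : ℝ) : ℂ) +
        ∑' n : ℕ, 2 * (-Complex.I)^(n+1) * ((besselJ (n+1) t : ℝ):ℂ) *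
          ((Real.cos ((((n:ℕ)+1:ℕ):ℝ)*θ) : ℝ):ℂ) := by
  -- step 1 : exp = product of two exps = big sum
  have hexp : Complex.exp (-Complex.I * (t : ℂ) * ((Real.cos θ : ℝ) : ℂ))
      = ∑' p : ℕ × ℕ, ff t θ p.1 * gg t θ p.2 := by
    have harg : (t:ℂ)/2 * uu θ + (t:ℂ)/2 * vv θ = -Complex.I * (t : ℂ) * ((Real.cos θ : ℝ) : ℂ) := by
      rw [uu, vv, Complex.ofReal_cos]
      have h2c := Complex.two_cos (x := (θ:ℂ))
      linear_combination (Complex.I * (t:ℂ) / 2) * h2c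
    rw [← harg, Complex.exp_add, cexp_tsum, cexp_tsum]
    exact tsum_mul_tsum_of_summable_norm (hff_norm t θ) (hgg_norm t θ)
  -- step 2 : reindex over ℤ × ℕ and fibers
  have hre : (∑' p : ℕ × ℕ, ff t θ p.1 * gg t θ p.2) = ∑' k : ℤ, FF t θ k := by
    rw [← (pairEquiv.tsum_eq (f := fun p : ℕ × ℕ => ff t θ p.1 * gg t θ p.2))]
    have h := hh_summable t θ
    exact Summable.tsum_prod' h (fun k => h.prod_factor k)
  -- step 3 : split the ℤ sum
  have hF := FF_summable t θ
  have hnat : Summable (fun n : ℕ => FF t θ (n:ℤ)) :=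
    hF.comp_injective Nat.cast_injective
  have hneg : Summable (fun n : ℕ => FF t θ (-((n:ℤ)+1))) :=
    hF.comp_injective (fun a b hab => by omega)
  have hsplit : ∑' k : ℤ, FF t θ k
      = (∑' n : ℕ, FF t θ (n:ℤ)) + ∑' n : ℕ, FF t θ (-((n:ℤ)+1)) :=
    tsum_of_nat_of_neg_add_one hnat hneg
  have hzero : ∑' n : ℕ, FF t θ (n:ℤ)
      = FF t θ 0 + ∑' n : ℕ, FF t θ ((n:ℤ)+1) := by
    rw [Summable.tsum_eq_zero_add hnat]
    congr 1
  have hnat1 : Summable (fun n : ℕ => FF t θ ((n:ℤ)+1)) :=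
    hF.comp_injective (fun a b hab => by omega)
  have hcomb : (∑' n : ℕ, FF t θ ((n:ℤ)+1)) + (∑' n : ℕ, FF t θ (-((n:ℤ)+1)))
      = ∑' n : ℕ, (FF t θ ((n:ℤ)+1) + FF t θ (-((n:ℤ)+1))) :=
    (Summable.tsum_add hnat1 hneg).symm
  have hterm : ∀ n : ℕ, FF t θ ((n:ℤ)+1) + FF t θ (-((n:ℤ)+1))
      = 2 * (-Complex.I)^(n+1) * ((besselJ (n+1) t : ℝ):ℂ) *
          ((Real.cos ((((n:ℕ)+1:ℕ):ℝ)*θ) : ℝ):ℂ) := by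
    intro n
    have h1 : ((n:ℤ)+1) = ((n+1 : ℕ) : ℤ) := by push_cast; ring
    rw [FF_neg t θ n, h1, FF_nat t θ (n+1), ← add_mul, upow_add_vpow t θ (n+1)]
    push_cast
    ring
  have hF0 : FF t θ 0 = ((besselJ 0 t : ℝ) : ℂ) := by
    have := FF_nat t θ 0
    simpa using this
  rw [hexp, hre, hsplit, hzero, add_assoc, hcomb, hF0]
  congr 1
  exact tsum_congr hterm

private noncomputable def GG (t θ : ℝ) (n : ℕ) : ℂ :=
  2 * (-Complex.I)^(n+1) * ((besselJ (n+1) t : ℝ):ℂ) *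
    ((Real.cos ((((n:ℕ)+1:ℕ):ℝ)*θ) : ℝ):ℂ)

private lemma G_norm_le (t θ : ℝ) (n : ℕ) :
    ‖GG t θ n‖
      ≤ 2 * Real.exp (t^2/4) * ((|t|/2)^(n+1) / (Nat.factorial (n+1) : ℝ)) := by
  rw [GG]
  have hJ := besselJ_abs_le t (n+1)
  have hcos : |Real.cos ((((n:ℕ)+1:ℕ):ℝ)*θ)| ≤ 1 := Real.abs_cos_le_one _
  have h1 : ‖(2:ℂ) * (-Complex.I)^(n+1) * ((besselJ (n+1) t : ℝ):ℂ) *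
        ((Real.cos ((((n:ℕ)+1:ℕ):ℝ)*θ) : ℝ):ℂ)‖
      = 2 * |besselJ (n+1) t| * |Real.cos ((((n:ℕ)+1:ℕ):ℝ)*θ)| := by
    rw [norm_mul, norm_mul, norm_mul, norm_pow, norm_neg, Complex.norm_I, one_pow, mul_one,
      Complex.norm_real, Complex.norm_real, Real.norm_eq_abs, Real.norm_eq_abs]
    norm_num
  rw [h1]
  calc 2 * |besselJ (n+1) t| * |Real.cos ((((n:ℕ)+1:ℕ):ℝ)*θ)|
      ≤ 2 * (Real.exp (t^2/4) * ((|t|/2)^(n+1) / (Nat.factorial (n+1) : ℝ))) * 1 := by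
        gcongr
    _ = 2 * Real.exp (t^2/4) * ((|t|/2)^(n+1) / (Nat.factorial (n+1) : ℝ)) := by ring

private lemma B_summable (t : ℝ) :
    Summable (fun n : ℕ => 2 * Real.exp (t^2/4) * ((|t|/2)^(n+1) / (Nat.factorial (n+1) : ℝ))) := by
  have h1 : Summable (fun n : ℕ => (|t|/2)^(n+1)/(Nat.factorial (n+1):ℝ)) :=
    (summable_nat_add_iff 1).2 (Real.summable_pow_div_factorial (|t|/2))
  exact h1.mul_left _

theorem stmt13 (t θ : ℝ) (K : ℕ) :
    ‖Complex.exp (-Complex.I * (t : ℂ) * ((Real.cos θ : ℝ) : ℂ)) -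
        (((besselJ 0 t : ℝ) : ℂ) + 2 * ∑ k ∈ Finset.Icc 1 K,
          (-Complex.I)^k * ((besselJ k t : ℝ) : ℂ) * ((Real.cos ((k:ℝ)*θ) : ℝ) : ℂ))‖
      ≤ 2 * Real.exp (t^2/4) * ∑' k : ℕ, (|t|/2)^(k+K+1) / (Nat.factorial (k+K+1) : ℝ)
    ∧ 2 * Real.exp (t^2/4) * (∑' k : ℕ, (|t|/2)^(k+K+1) / (Nat.factorial (k+K+1) : ℝ))
      ≤ 2 * Real.exp (t^2/4 + |t|/2) * (|t|/2)^(K+1) / (Nat.factorial (K+1) : ℝ) := by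
  constructor
  · -- part 1
    have hGnorm : Summable (fun n : ℕ => ‖GG t θ n‖) :=
      Summable.of_nonneg_of_le (fun n => norm_nonneg _) (fun n => G_norm_le t θ n) (B_summable t)
    have hG : Summable (GG t θ) := hGnorm.of_norm
    have hsum_eq : 2 * ∑ k ∈ Finset.Icc 1 K,
        (-Complex.I)^k * ((besselJ k t : ℝ) : ℂ) * ((Real.cos ((k:ℝ)*θ) : ℝ) : ℂ)
        = ∑ n ∈ Finset.range K, GG t θ n := by
      rw [Finset.mul_sum, ← Finset.Ico_add_one_right_eq_Icc, Finset.sum_Ico_eq_sum_range]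
      have hK : K + 1 - 1 = K := by omega
      rw [hK]
      refine Finset.sum_congr rfl fun i _ => ?_
      rw [GG]
      have h1 : 1 + i = i + 1 := by omega
      rw [h1]
      push_cast
      ring
    have key : Complex.exp (-Complex.I * (t : ℂ) * ((Real.cos θ : ℝ) : ℂ))
        = ((besselJ 0 t : ℝ) : ℂ) + ∑' n : ℕ, GG t θ n := jacobiAnger t θ
    have htail := Summable.sum_add_tsum_nat_add (f := GG t θ) K hG
    have hGnK : Summable (fun n : ℕ => ‖GG t θ (n + K)‖) :=
      (summable_nat_add_iff (f := fun n => ‖GG t θ n‖) K).2 hGnorm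
    have hdiff : Complex.exp (-Complex.I * (t : ℂ) * ((Real.cos θ : ℝ) : ℂ)) -
        (((besselJ 0 t : ℝ) : ℂ) + 2 * ∑ k ∈ Finset.Icc 1 K,
          (-Complex.I)^k * ((besselJ k t : ℝ) : ℂ) * ((Real.cos ((k:ℝ)*θ) : ℝ) : ℂ))
        = ∑' n : ℕ, GG t θ (n + K) := by
      rw [hsum_eq, key, ← htail]
      ring
    rw [hdiff]
    calc ‖∑' n : ℕ, GG t θ (n + K)‖ ≤ ∑' n : ℕ, ‖GG t θ (n + K)‖ :=
          norm_tsum_le_tsum_norm (f := fun n : ℕ => GG t θ (n + K)) hGnK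
      _ ≤ ∑' n : ℕ, 2 * Real.exp (t^2/4) * ((|t|/2)^(n+K+1) / (Nat.factorial (n+K+1) : ℝ)) := by
          refine Summable.tsum_le_tsum (fun n => ?_) hGnK
            ((summable_nat_add_iff (f := fun n : ℕ => 2 * Real.exp (t^2/4) *
              ((|t|/2)^(n+1) / (Nat.factorial (n+1) : ℝ))) K).2 (B_summable t))
          exact G_norm_le t θ (n + K)
      _ = 2 * Real.exp (t^2/4) * ∑' k : ℕ, (|t|/2)^(k+K+1) / (Nat.factorial (k+K+1) : ℝ) := by
          rw [tsum_mul_left]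
  · -- part 2
    have hsum0 : Summable (fun n : ℕ => (|t|/2)^(n+(K+1))/(Nat.factorial (n+(K+1)) : ℝ)) :=
      (summable_nat_add_iff (f := fun n : ℕ => (|t|/2)^n/(Nat.factorial n : ℝ)) (K+1)).2
        (Real.summable_pow_div_factorial (|t|/2))
    have hsum1 : Summable (fun k : ℕ => (|t|/2)^(k+K+1)/(Nat.factorial (k+K+1):ℝ)) :=
      (summable_congr fun k => by rw [show k + (K+1) = k + K + 1 from by omega]).1 hsum0
    have hsum2 : Summable (fun k : ℕ =>
        (|t|/2)^(K+1)/(Nat.factorial (K+1):ℝ) * ((|t|/2)^k/(Nat.factorial k:ℝ))) :=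
      (Real.summable_pow_div_factorial (|t|/2)).mul_left _
    have hle : ∀ k : ℕ, (|t|/2)^(k+K+1)/(Nat.factorial (k+K+1):ℝ)
        ≤ (|t|/2)^(K+1)/(Nat.factorial (K+1):ℝ) * ((|t|/2)^k/(Nat.factorial k:ℝ)) := by
      intro k
      have hpow : (|t|/2)^(k+K+1) = (|t|/2)^(K+1) * (|t|/2)^k := by
        rw [← pow_add]; congr 1; omega
      have hfac : ((Nat.factorial (K+1) * Nat.factorial k : ℕ) : ℝ)
          ≤ ((Nat.factorial (k+K+1) : ℕ) : ℝ) := by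
        have hd := Nat.factorial_mul_factorial_dvd_factorial_add (K+1) k
        rw [show K+1+k = k+K+1 from by omega] at hd
        exact_mod_cast Nat.le_of_dvd (Nat.factorial_pos _) hd
      have h2 : (|t|/2)^(K+1)/(Nat.factorial (K+1):ℝ) * ((|t|/2)^k/(Nat.factorial k:ℝ))
          = ((|t|/2)^(K+1)*(|t|/2)^k)/((Nat.factorial (K+1):ℝ)*(Nat.factorial k:ℝ)) := by ring
      rw [hpow, h2]
      have hfac' : (Nat.factorial (K+1):ℝ)*(Nat.factorial k:ℝ) ≤ (Nat.factorial (k+K+1) : ℝ) := by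
        push_cast at hfac
        exact hfac
      gcongr
    have hX : (∑' k : ℕ, (|t|/2)^(k+K+1)/(Nat.factorial (k+K+1):ℝ))
        ≤ (|t|/2)^(K+1)/(Nat.factorial (K+1):ℝ) * Real.exp (|t|/2) := by
      calc (∑' k : ℕ, (|t|/2)^(k+K+1)/(Nat.factorial (k+K+1):ℝ))
          ≤ ∑' k : ℕ, (|t|/2)^(K+1)/(Nat.factorial (K+1):ℝ) * ((|t|/2)^k/(Nat.factorial k:ℝ)) :=
            Summable.tsum_le_tsum hle hsum1 hsum2
        _ = (|t|/2)^(K+1)/(Nat.factorial (K+1):ℝ) * Real.exp (|t|/2) := by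
            rw [tsum_mul_left, ← rexp_tsum]
    calc 2 * Real.exp (t^2/4) * (∑' k : ℕ, (|t|/2)^(k+K+1) / (Nat.factorial (k+K+1) : ℝ))
        ≤ 2 * Real.exp (t^2/4) * ((|t|/2)^(K+1)/(Nat.factorial (K+1):ℝ) * Real.exp (|t|/2)) := by
          gcongr
      _ = 2 * Real.exp (t^2/4 + |t|/2) * (|t|/2)^(K+1) / (Nat.factorial (K+1) : ℝ) := by
          rw [Real.exp_add]; ring
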